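/- Let 𝒱 be a nonempty set of value functions and 𝒲 a nonempty set of weighting functions, and let ξ be a random variable such that E_{w⁻w⁺}[v(ξ − x)] is well defined for every x ∈ ℝ and every (v, w⁻, w⁺) ∈ 𝒱 × 𝒲 × 𝒲. Define the preference robust generalized shortfall risk ρ_{𝒱×𝒲}(ξ) := inf { x ∈ ℝ : E_{w⁻w⁺}[v(ξ − x)] ≤ 0 for all (v, w⁻, w⁺) ∈ 𝒱 × 𝒲 × 𝒲 } and the worst-case generalized shortfall risk Π_{𝒱×𝒲}(ξ) := sup_{(v,w⁻,w⁺) ∈ 𝒱×𝒲×𝒲} ρ_{(v,w⁻,w⁺)}(ξ). Then ρ_{𝒱×𝒲}(ξ) = Π_{𝒱×𝒲}(ξ) as elements of the extended real line (with inf ∅ = +∞). -/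

import Mathlib

open MeasureTheory Set

noncomputable section

/-- A value function: strictly increasing `v : ℝ → ℝ` with `v 0 = 0`. -/
def IsValueFun (v : ℝ → ℝ) : Prop := StrictMono v ∧ v 0 = 0

/-- A weighting function: a strictly increasing `w : [0,1] → [0,1]`
with `w 0 = 0` and `w 1 = 1`. -/
def IsWeightFun (w : ℝ → ℝ) : Prop :=
  StrictMonoOn w (Icc 0 1) ∧ MapsTo w (Icc 0 1) (Icc 0 1) ∧ w 0 = 0 ∧ w 1 = 1

/-- The CPT distorted expectation
`E_{w⁻w⁺}[v(ζ)] = ∫₀^∞ w⁺(ℙ(v(ζ) ≥ t)) dt − ∫₀^∞ w⁻(ℙ(v(ζ) ≤ −t)) dt`. -/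
def cptE {Ω : Type*} [MeasurableSpace Ω] (P : Measure Ω)
    (v wm wp : ℝ → ℝ) (ζ : Ω → ℝ) : ℝ :=
  (∫ t in Ioi (0:ℝ), wp (P {ω | t ≤ v (ζ ω)}).toReal)
    - ∫ t in Ioi (0:ℝ), wm (P {ω | v (ζ ω) ≤ -t}).toReal

/-- Both integrals defining the CPT distorted expectation are finite. -/
def CptWellDef {Ω : Type*} [MeasurableSpace Ω] (P : Measure Ω)
    (v wm wp : ℝ → ℝ) (ζ : Ω → ℝ) : Prop :=
  IntegrableOn (fun t => wp (P {ω | t ≤ v (ζ ω)}).toReal) (Ioi 0) ∧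
    IntegrableOn (fun t => wm (P {ω | v (ζ ω) ≤ -t}).toReal) (Ioi 0)

/-- The generalized shortfall risk measure (GSR-CPT):
`ρ_{(v,w⁻,w⁺)}(ξ) = inf { x : E_{w⁻w⁺}[v(ξ − x)] ≤ 0 }`, with `inf ∅ = +∞`. -/
def gsr {Ω : Type*} [MeasurableSpace Ω] (P : Measure Ω)
    (v wm wp : ℝ → ℝ) (ξ : Ω → ℝ) : EReal :=
  sInf ((fun x : ℝ => (x : EReal)) ''
    {x : ℝ | cptE P v wm wp (fun ω => ξ ω - x) ≤ 0})

/-- A bounded random variable. -/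
def IsBddRV {Ω : Type*} [MeasurableSpace Ω] (ξ : Ω → ℝ) : Prop :=
  Measurable ξ ∧ ∃ M : ℝ, ∀ ω, |ξ ω| ≤ M

/-- A weighting function which is continuously differentiable on `[0,1]`
with strictly positive derivative. -/
def SmoothWeight (w : ℝ → ℝ) : Prop :=
  IsWeightFun w ∧ ContDiffOn ℝ 1 w (Icc 0 1) ∧
    ∀ p ∈ Icc (0:ℝ) 1, 0 < derivWithin w (Icc 0 1) p

lemma cptE_anti {Ω : Type*} [MeasurableSpace Ω] (P : Measure Ω) [IsProbabilityMeasure P]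
    {v wm wp : ℝ → ℝ} (hv : IsValueFun v) (hwm : IsWeightFun wm) (hwp : IsWeightFun wp)
    (ξ : Ω → ℝ) {x y : ℝ} (hxy : x ≤ y)
    (hx : CptWellDef P v wm wp (fun ω => ξ ω - x))
    (hy : CptWellDef P v wm wp (fun ω => ξ ω - y)) :
    cptE P v wm wp (fun ω => ξ ω - y) ≤ cptE P v wm wp (fun ω => ξ ω - x) := by
  have hmem : ∀ s : Set Ω, (P s).toReal ∈ Icc (0:ℝ) 1 := fun s =>
    ⟨ENNReal.toReal_nonneg, by
      simpa using ENNReal.toReal_mono ENNReal.one_ne_top (prob_le_one (μ := P) (s := s))⟩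
  apply sub_le_sub
  · apply setIntegral_mono_on hy.1 hx.1 measurableSet_Ioi
    intro t _
    apply hwp.1.monotoneOn (hmem _) (hmem _)
    apply ENNReal.toReal_mono (measure_ne_top _ _)
    apply measure_mono
    intro ω hω
    exact le_trans hω (hv.1.monotone (by dsimp only; linarith))
  · apply setIntegral_mono_on hx.2 hy.2 measurableSet_Ioi
    intro t _
    apply hwm.1.monotoneOn (hmem _) (hmem _)
    apply ENNReal.toReal_mono (measure_ne_top _ _)
    apply measure_mono
    intro ω hω
    exact le_trans (hv.1.monotone (by dsimp only; linarith)) hω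

/-- the preference robust generalized shortfall risk
`ρ_{𝒱×𝒲}(ξ) = inf { x : E_{w⁻w⁺}[v(ξ−x)] ≤ 0 ∀ (v,w⁻,w⁺) ∈ 𝒱×𝒲×𝒲 }`
coincides with the worst-case generalized shortfall risk
`Π_{𝒱×𝒲}(ξ) = sup_{(v,w⁻,w⁺) ∈ 𝒱×𝒲×𝒲} ρ_{(v,w⁻,w⁺)}(ξ)`
in the extended real line. -/
theorem prgsr_eq_worst_gsr {Ω : Type*} [MeasurableSpace Ω] (P : Measure Ω)
    [IsProbabilityMeasure P]
    (V W : Set (ℝ → ℝ)) (hVne : V.Nonempty) (hWne : W.Nonempty)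
    (hV : ∀ v ∈ V, IsValueFun v) (hW : ∀ w ∈ W, IsWeightFun w)
    (ξ : Ω → ℝ) (hξ : Measurable ξ)
    (hwd : ∀ x : ℝ, ∀ v ∈ V, ∀ wm ∈ W, ∀ wp ∈ W,
      CptWellDef P v wm wp (fun ω => ξ ω - x)) :
    sInf ((fun x : ℝ => (x : EReal)) ''
        {x : ℝ | ∀ v ∈ V, ∀ wm ∈ W, ∀ wp ∈ W,
          cptE P v wm wp (fun ω => ξ ω - x) ≤ 0})
      = ⨆ v ∈ V, ⨆ wm ∈ W, ⨆ wp ∈ W, gsr P v wm wp ξ := by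
  apply le_antisymm
  · rw [← EReal.le_of_forall_lt_iff_le]
    intro z hz
    apply sInf_le
    refine ⟨z, ?_, rfl⟩
    intro v hv wm hwm wp hwp
    have hle : gsr P v wm wp ξ ≤ ⨆ v ∈ V, ⨆ wm ∈ W, ⨆ wp ∈ W, gsr P v wm wp ξ :=
      le_iSup₂_of_le v hv (le_iSup₂_of_le wm hwm (le_iSup₂_of_le wp hwp le_rfl))
    have hlt : gsr P v wm wp ξ < (z : EReal) := lt_of_le_of_lt hle hz
    obtain ⟨e, ⟨x, hxA, rfl⟩, hex⟩ := sInf_lt_iff.1 hlt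
    have hex' : (x : EReal) < (z : EReal) := hex
    have hxz : x ≤ z := le_of_lt (by exact_mod_cast hex')
    exact le_trans
      (cptE_anti P (hV v hv) (hW wm hwm) (hW wp hwp) ξ hxz
        (hwd x v hv wm hwm wp hwp) (hwd z v hv wm hwm wp hwp)) hxA
  · refine iSup₂_le fun v hv => iSup₂_le fun wm hwm => iSup₂_le fun wp hwp => ?_
    apply sInf_le_sInf
    apply image_mono
    intro x hx
    exact hx v hv wm hwm wp hwp
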